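/- Let N ≥ 2 be an even integer and c = (c₁,c₂,c₃) ∈ ℝ³. The matrix ϖ(c) is positive semidefinite if and only if (c₁,c₂,c₃) lies in the tetrahedron T_{(−1)^{N/2}}, i.e. the convex hull in ℝ³ of the four points (1,(−1)^{N/2},1), (−1,−(−1)^{N/2},1), (1,−(−1)^{N/2},−1), (−1,(−1)^{N/2},−1). -/

import Mathlib

open Matrix BigOperators Polynomial
open scoped ComplexOrder

/-- The three Pauli matrices. -/
noncomputable def pauli : Fin 3 → Matrix (Fin 2) (Fin 2) ℂ :=
  ![!![0, 1; 1, 0], !![0, -Complex.I; Complex.I, 0], !![1, 0; 0, -1]]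

/-- The `N`-fold Kronecker power of a 2×2 matrix, with rows and columns indexed by
`Fin N → Fin 2` (the `N`-qubit computational basis). -/
noncomputable def kronPow (A : Matrix (Fin 2) (Fin 2) ℂ) (N : ℕ) :
    Matrix (Fin N → Fin 2) (Fin N → Fin 2) ℂ :=
  Matrix.of fun i j => ∏ k, A (i k) (j k)

/-- The `M³_N` state `ϖ(c) = 2^{-N} (I + c₁ σ₁^{⊗N} + c₂ σ₂^{⊗N} + c₃ σ₃^{⊗N})`. -/
noncomputable def Mstate (N : ℕ) (c : Fin 3 → ℝ) :
    Matrix (Fin N → Fin 2) (Fin N → Fin 2) ℂ :=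
  ((2 : ℂ) ^ N)⁻¹ • (1 + ∑ j : Fin 3, (c j : ℂ) • kronPow (pauli j) N)


/-- The tetrahedron `T_s`: convex hull of `(1,s,1), (−1,−s,1), (1,−s,−1), (−1,s,−1)`. -/
noncomputable def tet (s : ℝ) : Set (Fin 3 → ℝ) :=
  convexHull ℝ {![1, s, 1], ![-1, -s, 1], ![1, -s, -1], ![-1, s, -1]}

lemma kronPow_mul (A B : Matrix (Fin 2) (Fin 2) ℂ) (N : ℕ) :
    kronPow A N * kronPow B N = kronPow (A * B) N := by
  ext i j
  simp only [kronPow, Matrix.mul_apply, Matrix.of_apply]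
  rw [Fintype.prod_sum fun k t => A (i k) t * B t (j k)]
  exact Finset.sum_congr rfl fun x _ => (Finset.prod_mul_distrib).symm

lemma kronPow_one (N : ℕ) : kronPow 1 N = 1 := by
  ext i j
  simp only [kronPow, Matrix.of_apply, Matrix.one_apply]
  rw [Fintype.prod_boole]
  simp [funext_iff]

lemma kronPow_smul (z : ℂ) (A : Matrix (Fin 2) (Fin 2) ℂ) (N : ℕ) :
    kronPow (z • A) N = z ^ N • kronPow A N := by
  ext i j
  simp [kronPow, Finset.prod_mul_distrib]

lemma kronPow_conjTranspose (A : Matrix (Fin 2) (Fin 2) ℂ) (N : ℕ) :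
    (kronPow A N)ᴴ = kronPow Aᴴ N := by
  ext i j
  simp [kronPow, Matrix.conjTranspose_apply, map_prod]

lemma trace_kronPow (A : Matrix (Fin 2) (Fin 2) ℂ) (N : ℕ) :
    (kronPow A N).trace = A.trace ^ N := by
  simp only [Matrix.trace, Matrix.diag, kronPow, Matrix.of_apply]
  exact (Fintype.sum_pow (fun t => A t t) N).symm

lemma pauli_mul_self (j : Fin 3) : pauli j * pauli j = 1 := by
  fin_cases j <;>
    simp [pauli, Matrix.mul_fin_two, Matrix.one_fin_two, Complex.I_mul_I] <;>
    norm_num [Matrix.one_fin_two]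

lemma pauli_conjTranspose (j : Fin 3) : (pauli j)ᴴ = pauli j := by
  fin_cases j <;> ext i k <;> fin_cases i <;> fin_cases k <;>
    simp [pauli, Matrix.conjTranspose_apply]

lemma pauli02 : pauli 0 * pauli 2 = (-Complex.I) • pauli 1 := by
  ext i k
  fin_cases i <;> fin_cases k <;>
    simp [pauli, Matrix.mul_apply, Fin.sum_univ_two]

lemma pauli20 : pauli 2 * pauli 0 = Complex.I • pauli 1 := by
  ext i k <;> fin_cases i <;> fin_cases k <;>
    simp [pauli, Matrix.mul_apply, Fin.sum_univ_two]

lemma trace_pauli (j : Fin 3) : (pauli j).trace = 0 := by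
  fin_cases j <;> simp [pauli, Matrix.trace_fin_two]

lemma trace_pauli_mul (i j : Fin 3) :
    (pauli i * pauli j).trace = if i = j then 2 else 0 := by
  fin_cases i <;> fin_cases j <;>
    simp [pauli, Matrix.trace_fin_two, Matrix.mul_apply, Fin.sum_univ_two] <;>
    ring_nf <;> simp [Complex.I_sq]

lemma psd_smul {n : Type*} [Fintype n] {M : Matrix n n ℂ} (hM : M.PosSemidef)
    {r : ℝ} (hr : 0 ≤ r) : ((r : ℂ) • M).PosSemidef := by
  refine Matrix.PosSemidef.of_dotProduct_mulVec_nonneg ?_ fun x => ?_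
  · rw [Matrix.IsHermitian, Matrix.conjTranspose_smul, hM.1, Complex.star_def, Complex.conj_ofReal]
  · rw [Matrix.smul_mulVec, dotProduct_smul, smul_eq_mul]
    exact mul_nonneg (Complex.zero_le_real.2 hr) (hM.dotProduct_mulVec_nonneg x)

lemma psd_trace_nonneg {n : Type*} [Fintype n] [DecidableEq n] {A B : Matrix n n ℂ}
    (hA : A.PosSemidef) (hB : B.PosSemidef) : 0 ≤ (A * B).trace := by
  obtain ⟨C, hC⟩ : ∃ C : Matrix n n ℂ, B = Cᴴ * C := by
    open scoped MatrixOrder in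
    exact CStarAlgebra.nonneg_iff_eq_star_mul_self.mp hB.nonneg
  rw [hC, ← Matrix.mul_assoc, Matrix.trace_mul_cycle]
  have hP : (C * A * Cᴴ).PosSemidef := hA.mul_mul_conjTranspose_same C
  rw [Matrix.trace]
  refine Finset.sum_nonneg fun i _ => ?_
  have := hP.dotProduct_mulVec_nonneg (Pi.single i 1)
  simpa [Matrix.mulVec_single, dotProduct, Pi.single_apply] using this

lemma neg_i_pow (N : ℕ) (hN : Even N) : (-Complex.I) ^ N = ((-1 : ℂ)) ^ (N / 2) := by
  obtain ⟨m, hm⟩ := hN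
  subst hm
  rw [show m + m = 2 * m by ring, pow_mul, Nat.mul_div_cancel_left _ (by norm_num)]
  norm_num [Complex.I_sq]

lemma i_pow (N : ℕ) (hN : Even N) : Complex.I ^ N = ((-1 : ℂ)) ^ (N / 2) := by
  obtain ⟨m, hm⟩ := hN
  subst hm
  rw [show m + m = 2 * m by ring, pow_mul, Nat.mul_div_cancel_left _ (by norm_num)]
  norm_num [Complex.I_sq]

lemma kron02 (N : ℕ) (hN : Even N) :
    kronPow (pauli 0) N * kronPow (pauli 2) N = ((-1:ℂ)) ^ (N/2) • kronPow (pauli 1) N := by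
  rw [kronPow_mul, pauli02, kronPow_smul, neg_i_pow N hN]

lemma kron20 (N : ℕ) (hN : Even N) :
    kronPow (pauli 2) N * kronPow (pauli 0) N = ((-1:ℂ)) ^ (N/2) • kronPow (pauli 1) N := by
  rw [kronPow_mul, pauli20, kronPow_smul, i_pow N hN]

lemma vertex_psd (N : ℕ) (hN : Even N) {a b : ℝ} (ha : a = 1 ∨ a = -1) (hb : b = 1 ∨ b = -1)
    (v : Fin 3 → ℝ) (hv0 : v 0 = a) (hv2 : v 2 = b) (hv1 : v 1 = (-1:ℝ)^(N/2) * a * b) :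
    (Mstate N v).PosSemidef := by
  set K : Fin 3 → Matrix (Fin N → Fin 2) (Fin N → Fin 2) ℂ := fun j => kronPow (pauli j) N with hK
  set R1 : Matrix (Fin N → Fin 2) (Fin N → Fin 2) ℂ := 1 + (a:ℂ) • K 0 with hR1
  set R3 : Matrix (Fin N → Fin 2) (Fin N → Fin 2) ℂ := 1 + (b:ℂ) • K 2 with hR3
  have ha2 : (a:ℂ) * a = 1 := by rcases ha with h | h <;> rw [h] <;> norm_num
  have hb2 : (b:ℂ) * b = 1 := by rcases hb with h | h <;> rw [h] <;> norm_num
  have hKK : ∀ j, K j * K j = 1 := fun j => by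
    rw [hK]; rw [kronPow_mul, pauli_mul_self, kronPow_one]
  have h02 : K 0 * K 2 = ((-1:ℂ))^(N/2) • K 1 := kron02 N hN
  have h20 : K 2 * K 0 = ((-1:ℂ))^(N/2) • K 1 := kron20 N hN
  have hcomm : R1 * R3 = R3 * R1 := by
    rw [hR1, hR3]
    simp only [add_mul, mul_add, one_mul, mul_one, Matrix.smul_mul, Matrix.mul_smul, h02, h20]
    module
  have hR1sq : R1 * R1 = (2:ℂ) • R1 := by
    rw [hR1]
    simp only [add_mul, mul_add, one_mul, mul_one, Matrix.smul_mul, Matrix.mul_smul, hKK 0,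
      smul_smul, ha2]
    module
  have hR3sq : R3 * R3 = (2:ℂ) • R3 := by
    rw [hR3]
    simp only [add_mul, mul_add, one_mul, mul_one, Matrix.smul_mul, Matrix.mul_smul, hKK 2,
      smul_smul, hb2]
    module
  have hherm1 : R1ᴴ = R1 := by
    rw [hR1]
    simp [Matrix.conjTranspose_smul, kronPow_conjTranspose, pauli_conjTranspose,
      Complex.star_def, Complex.conj_ofReal, hK]
  have hherm3 : R3ᴴ = R3 := by
    rw [hR3]
    simp [Matrix.conjTranspose_smul, kronPow_conjTranspose, pauli_conjTranspose,
      Complex.star_def, Complex.conj_ofReal, hK]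
  have hBB : (((2:ℂ)⁻¹) • (R1 * R3))ᴴ * (((2:ℂ)⁻¹) • (R1 * R3)) = R1 * R3 := by
    have h4 : R3 * R1 * (R1 * R3) = (4:ℂ) • (R1 * R3) := by
      calc R3 * R1 * (R1 * R3) = R3 * (R1 * R1) * R3 := by noncomm_ring
        _ = R3 * ((2:ℂ) • R1) * R3 := by rw [hR1sq]
        _ = (2:ℂ) • (R3 * R1 * R3) := by
            simp only [Matrix.mul_smul, Matrix.smul_mul]
        _ = (2:ℂ) • (R1 * R3 * R3) := by rw [← hcomm]
        _ = (2:ℂ) • ((2:ℂ) • (R1 * R3)) := by rw [Matrix.mul_assoc, hR3sq, Matrix.mul_smul]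
        _ = (4:ℂ) • (R1 * R3) := by rw [smul_smul]; norm_num
    rw [Matrix.conjTranspose_smul, Matrix.conjTranspose_mul, hherm1, hherm3,
      Matrix.smul_mul, Matrix.mul_smul, smul_smul, h4, smul_smul,
      show star ((2:ℂ)⁻¹) * 2⁻¹ * 4 = 1 by norm_num [Complex.star_def, map_inv₀],
      one_smul]
  have hpsd : (R1 * R3).PosSemidef := hBB ▸ Matrix.posSemidef_conjTranspose_mul_self _
  have hMeq : Mstate N v = ((((2:ℝ)^N)⁻¹ : ℝ) : ℂ) • (R1 * R3) := by
    have hsc : ((((2:ℝ)^N)⁻¹ : ℝ) : ℂ) = ((2:ℂ)^N)⁻¹ := by push_cast; ring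
    rw [hsc, Mstate, hR1, hR3]
    simp only [add_mul, mul_add, one_mul, mul_one, Matrix.smul_mul, Matrix.mul_smul, h02,
      smul_smul, Fin.sum_univ_three, hv0, hv2, hv1, ← hK]
    push_cast
    module
  rw [hMeq]
  exact psd_smul hpsd (by positivity)

lemma trace_one_qubits (N : ℕ) :
    (1 : Matrix (Fin N → Fin 2) (Fin N → Fin 2) ℂ).trace = (2:ℂ)^N := by
  rw [Matrix.trace_one]
  simp [Fintype.card_fun]

lemma trace_K (N : ℕ) (hN1 : 1 ≤ N) (j : Fin 3) : (kronPow (pauli j) N).trace = 0 := by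
  rw [trace_kronPow, trace_pauli, zero_pow (by omega)]

lemma trace_KK (N : ℕ) (hN1 : 1 ≤ N) (i j : Fin 3) :
    (kronPow (pauli i) N * kronPow (pauli j) N).trace = if i = j then (2:ℂ)^N else 0 := by
  rw [kronPow_mul, trace_kronPow, trace_pauli_mul]
  split_ifs with h
  · rfl
  · exact zero_pow (by omega)

lemma trace_Mstate_mul (N : ℕ) (hN1 : 1 ≤ N) (c d : Fin 3 → ℝ) :
    (Mstate N c * Mstate N d).trace
      = ((2:ℂ)^N)⁻¹ * (1 + ∑ j : Fin 3, (c j : ℂ) * d j) := by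
  rw [Mstate, Mstate]
  simp only [Fin.sum_univ_three, Matrix.smul_mul, Matrix.mul_smul, smul_smul, add_mul,
    mul_add, one_mul, mul_one]
  simp only [Matrix.trace_add, Matrix.trace_smul, trace_one_qubits, trace_K N hN1,
    trace_KK N hN1, smul_eq_mul, mul_zero, add_zero, zero_add]
  simp only [Fin.reduceEq, reduceIte, mul_zero, zero_mul, add_zero, zero_add, if_true, if_false]
  norm_num
  field_simp
lemma Mstate_combo (N : ℕ) (c d : Fin 3 → ℝ) (a b : ℝ) (hab : a + b = 1) :
    Mstate N (a • c + b • d) = (a : ℂ) • Mstate N c + (b : ℂ) • Mstate N d := by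
  ext i j
  have hab' : (a : ℂ) + b = 1 := by exact_mod_cast hab
  simp only [Mstate, Matrix.smul_apply, Matrix.add_apply, Fin.sum_univ_three,
    Pi.add_apply, Pi.smul_apply, smul_eq_mul, Complex.ofReal_add, Complex.ofReal_mul]
  simp only [← inv_pow]
  linear_combination (-((2:ℂ)⁻¹)^N * (1 : Matrix (Fin N → Fin 2) (Fin N → Fin 2) ℂ) i j) * hab'


theorem stmt2 (N : ℕ) (hN : Even N) (hN2 : 2 ≤ N) (c : Fin 3 → ℝ) :
    (Mstate N c).PosSemidef ↔ c ∈ tet ((-1 : ℝ)^(N/2)) := by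
  have hts : ((-1:ℝ)^(N/2)) * ((-1:ℝ)^(N/2)) = 1 := by
    rw [← pow_add]
    exact Even.neg_one_pow ⟨N/2, rfl⟩
  set t : ℝ := (-1 : ℝ)^(N/2) with ht
  set v : Fin 4 → (Fin 3 → ℝ) := ![![1, t, 1], ![-1, -t, 1], ![1, -t, -1], ![-1, t, -1]] with hv
  have hvert : ∀ i : Fin 4, (Mstate N (v i)).PosSemidef := by
    intro i
    fin_cases i
    · exact vertex_psd N hN (a := 1) (b := 1) (Or.inl rfl) (Or.inl rfl) _
        (by simp [hv, Matrix.vecHead, Matrix.vecTail]) (by simp [hv, Matrix.vecHead, Matrix.vecTail]) (by simp [hv, Matrix.vecHead, Matrix.vecTail, ht])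
    · exact vertex_psd N hN (a := -1) (b := 1) (Or.inr rfl) (Or.inl rfl) _
        (by simp [hv, Matrix.vecHead, Matrix.vecTail]) (by simp [hv, Matrix.vecHead, Matrix.vecTail]) (by simp [hv, Matrix.vecHead, Matrix.vecTail, ht])
    · exact vertex_psd N hN (a := 1) (b := -1) (Or.inl rfl) (Or.inr rfl) _
        (by simp [hv, Matrix.vecHead, Matrix.vecTail]) (by simp [hv, Matrix.vecHead, Matrix.vecTail]) (by simp [hv, Matrix.vecHead, Matrix.vecTail, ht])
    · exact vertex_psd N hN (a := -1) (b := -1) (Or.inr rfl) (Or.inr rfl) _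
        (by simp [hv, Matrix.vecHead, Matrix.vecTail]) (by simp [hv, Matrix.vecHead, Matrix.vecTail]) (by simp [hv, Matrix.vecHead, Matrix.vecTail, ht])
  constructor
  · intro h
    have hineq : ∀ i : Fin 4, 0 ≤ 1 + ∑ j : Fin 3, c j * v i j := by
      intro i
      have h0 := psd_trace_nonneg h (hvert i)
      rw [trace_Mstate_mul N (by omega) c (v i)] at h0
      have hcast : ((2:ℂ)^N)⁻¹ * (1 + ∑ j : Fin 3, (c j : ℂ) * (v i j))
          = ((((2:ℝ)^N)⁻¹ * (1 + ∑ j : Fin 3, c j * v i j) : ℝ) : ℂ) := by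
        push_cast
        ring
      rw [hcast, Complex.zero_le_real] at h0
      have h2 : (0:ℝ) < ((2:ℝ)^N)⁻¹ := by positivity
      nlinarith
    set w : Fin 4 → ℝ := fun i => (1 + ∑ j : Fin 3, c j * v i j) / 4 with hw
    have hw0 : ∀ i ∈ Finset.univ, 0 ≤ w i := fun i _ => by
      have := hineq i; rw [hw]; dsimp only; linarith
    have hws : ∑ i : Fin 4, w i = 1 := by
      simp only [hw, hv, Fin.sum_univ_four, Fin.sum_univ_three]
      simp [Matrix.vecHead, Matrix.vecTail]
      ring
    have hcm : Finset.univ.centerMass w v = c := by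
      rw [Finset.centerMass_eq_of_sum_1 _ _ hws]
      funext j
      fin_cases j
      · simp only [hw, hv, Fin.sum_univ_four, Fin.sum_univ_three, Finset.sum_apply,
          Pi.smul_apply, smul_eq_mul]
        simp [Matrix.vecHead, Matrix.vecTail]
        ring
      · simp only [hw, hv, Fin.sum_univ_four, Fin.sum_univ_three, Finset.sum_apply,
          Pi.smul_apply, smul_eq_mul]
        simp [Matrix.vecHead, Matrix.vecTail]
        linear_combination (c 1) * hts
      · simp only [hw, hv, Fin.sum_univ_four, Fin.sum_univ_three, Finset.sum_apply,
          Pi.smul_apply, smul_eq_mul]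
        simp [Matrix.vecHead, Matrix.vecTail]
        ring
    rw [tet]
    have hz : ∀ i ∈ Finset.univ, v i ∈
        ({![1, t, 1], ![-1, -t, 1], ![1, -t, -1], ![-1, t, -1]} : Set (Fin 3 → ℝ)) := by
      intro i _
      fin_cases i <;> simp [hv, Matrix.vecHead, Matrix.vecTail]
    exact hcm ▸ Finset.centerMass_mem_convexHull _ hw0 (by rw [hws]; norm_num) hz
  · intro hmem
    have hconv : Convex ℝ {x : Fin 3 → ℝ | (Mstate N x).PosSemidef} := by
      intro x hx y hy a b ha hb hab
      have := Mstate_combo N x y a b hab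
      simp only [Set.mem_setOf_eq] at hx hy ⊢
      rw [this]
      exact (psd_smul hx ha).add (psd_smul hy hb)
    have hsub : ({![1, t, 1], ![-1, -t, 1], ![1, -t, -1], ![-1, t, -1]} : Set (Fin 3 → ℝ))
        ⊆ {x : Fin 3 → ℝ | (Mstate N x).PosSemidef} := by
      intro z hz
      simp only [Set.mem_insert_iff, Set.mem_singleton_iff] at hz
      rcases hz with rfl | rfl | rfl | rfl
      · exact hvert 0
      · exact hvert 1
      · exact hvert 2
      · exact hvert 3
    exact convexHull_min hsub hconv hmem
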